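/- Let ζ ∈ ℝᵖ, λ, ω > 0, ϑ > 0, γϑ > 1. With p_γ the MCP as above, if ‖ζ‖ ≤ γλω and ‖ζ‖ > λω/ϑ, then the minimizer of g(δ) = (ϑ/2)‖ζ − δ‖² + p_γ(‖δ‖, λω) over the set {δ : ‖δ‖ ≤ γλω} is δ* = S(ζ, λω/ϑ)/(1 − 1/(γϑ)), where S(z, t) = (1 − t/‖z‖)₊ z. -/

import Mathlib

/-- Closed-form MCP penalty: `p_γ(t, μ) = μt − t²/(2γ)` for `t ≤ γμ` and `γμ²/2` otherwise. -/
noncomputable def mcpClosed (γ μ t : ℝ) : ℝ :=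
  if t ≤ γ * μ then μ * t - t ^ 2 / (2 * γ) else γ * μ ^ 2 / 2

/-- Groupwise soft-thresholding operator `S(z, t) = (1 - t/‖z‖)₊ • z` (with `S(0,t) = 0`). -/
noncomputable def softThresh {p : ℕ} (z : EuclideanSpace ℝ (Fin p)) (t : ℝ) :
    EuclideanSpace ℝ (Fin p) :=
  max (1 - t / ‖z‖) 0 • z

lemma key_ineq_aux (r s sstar μ ϑ γ : ℝ) (hγ : 0 < γ) (hd : 0 ≤ ϑ - 1/γ)
    (hds : (ϑ - 1/γ) * sstar = ϑ * r - μ) :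
    ϑ/2*(r-sstar)^2 + (μ*sstar - sstar^2/(2*γ)) ≤ ϑ/2*(r-s)^2 + (μ*s - s^2/(2*γ)) := by
  have hkey : (ϑ/2*(r-s)^2 + (μ*s - s^2/(2*γ))) -
      (ϑ/2*(r-sstar)^2 + (μ*sstar - sstar^2/(2*γ)))
      = (ϑ - 1/γ)/2*(s - sstar)^2 + ((ϑ - 1/γ)*sstar - (ϑ*r - μ))*(s - sstar) := by
    field_simp
    ring
  have h0 : (ϑ - 1/γ)*sstar - (ϑ*r - μ) = 0 := by rw [hds]; ring
  rw [h0, zero_mul, add_zero] at hkey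
  linarith [mul_nonneg hd (sq_nonneg (s - sstar))]

theorem stmt_10 {p : ℕ} (ζ : EuclideanSpace ℝ (Fin p)) (lam ω ϑ γ : ℝ)
    (hlam : 0 < lam) (hω : 0 < ω) (hϑ : 0 < ϑ) (hγϑ : 1 < γ * ϑ)
    (hζle : ‖ζ‖ ≤ γ * lam * ω) (hζgt : lam * ω / ϑ < ‖ζ‖) :
    let δstar : EuclideanSpace ℝ (Fin p) :=
      (1 - 1 / (γ * ϑ))⁻¹ • softThresh ζ (lam * ω / ϑ)
    ‖δstar‖ ≤ γ * lam * ω ∧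
      ∀ δ : EuclideanSpace ℝ (Fin p), ‖δ‖ ≤ γ * lam * ω →
        ϑ / 2 * ‖ζ - δstar‖ ^ 2 + mcpClosed γ (lam * ω) ‖δstar‖ ≤
          ϑ / 2 * ‖ζ - δ‖ ^ 2 + mcpClosed γ (lam * ω) ‖δ‖ := by
  intro δstar
  have hμ : 0 < lam * ω := mul_pos hlam hω
  have hγ : 0 < γ := by nlinarith
  have hr : 0 < ‖ζ‖ := lt_trans (by positivity) hζgt
  have hb : 0 < 1 - 1 / (γ * ϑ) := by
    rw [sub_pos, div_lt_one (by positivity)]; exact hγϑ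
  have hlt1 : (lam * ω / ϑ) / ‖ζ‖ < 1 := (div_lt_one hr).2 hζgt
  have hm : max (1 - (lam * ω / ϑ) / ‖ζ‖) 0 = 1 - (lam * ω / ϑ) / ‖ζ‖ := by
    rw [max_eq_left]; linarith
  have hδstar : δstar = ((1 - 1/(γ*ϑ))⁻¹ * (1 - (lam * ω / ϑ) / ‖ζ‖)) • ζ := by
    show (1 - 1/(γ*ϑ))⁻¹ • softThresh ζ (lam*ω/ϑ) = _
    rw [softThresh, hm, smul_smul]
  set c : ℝ := (1 - 1/(γ*ϑ))⁻¹ * (1 - (lam * ω / ϑ) / ‖ζ‖) with hc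
  have hc0 : 0 ≤ c := by
    apply mul_nonneg (le_of_lt (inv_pos.2 hb)); linarith
  have hnorm : ‖δstar‖ = c * ‖ζ‖ := by
    rw [hδstar, norm_smul, Real.norm_eq_abs, abs_of_nonneg hc0]
  have hds : (ϑ - 1/γ) * (c * ‖ζ‖) = ϑ * ‖ζ‖ - lam * ω := by
    have hne1 : γ * ϑ - 1 ≠ 0 := by intro h; nlinarith
    have h1 : c * ‖ζ‖ * (1 - 1/(γ*ϑ)) = ‖ζ‖ - lam*ω/ϑ := by
      rw [hc]
      field_simp [hne1, hb.ne', hr.ne', hϑ.ne', hγ.ne']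
    have h2 : (ϑ - 1/γ) = ϑ * (1 - 1/(γ*ϑ)) := by
      field_simp [hne1, hϑ.ne', hγ.ne']
    calc (ϑ - 1/γ) * (c * ‖ζ‖) = ϑ * (c * ‖ζ‖ * (1 - 1/(γ*ϑ))) := by rw [h2]; ring
      _ = ϑ * (‖ζ‖ - lam*ω/ϑ) := by rw [h1]
      _ = ϑ * ‖ζ‖ - lam * ω := by field_simp [hϑ.ne']
  have hd : 0 < ϑ - 1/γ := by
    rw [sub_pos, div_lt_iff₀ hγ]; nlinarith
  have hsle : c * ‖ζ‖ ≤ γ * (lam * ω) := by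
    have h2 : (ϑ - 1/γ) * (γ*(lam*ω)) = ϑ*(γ*lam*ω) - lam*ω := by
      field_simp
    nlinarith [mul_le_mul_of_nonneg_left hζle hϑ.le]
  have hslr : c * ‖ζ‖ ≤ ‖ζ‖ := by
    have h3 : ‖ζ‖ / γ ≤ lam * ω := (div_le_iff₀ hγ).2 (by linarith)
    have h4 : (ϑ - 1/γ) * (c*‖ζ‖) ≤ (ϑ - 1/γ) * ‖ζ‖ := by
      rw [hds]
      have h5 : (ϑ - 1/γ) * ‖ζ‖ = ϑ*‖ζ‖ - ‖ζ‖/γ := by ring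
      linarith [h3]
    exact (mul_le_mul_iff_right₀ hd).mp h4
  have hcle : c ≤ 1 := by nlinarith [hslr]
  have hsub : ‖ζ - δstar‖ = ‖ζ‖ - c * ‖ζ‖ := by
    rw [hδstar]
    have h1 : ζ - c • ζ = (1 - c) • ζ := by rw [sub_smul, one_smul]
    rw [h1, norm_smul, Real.norm_eq_abs, abs_of_nonneg (by linarith)]
    ring
  refine ⟨by rw [hnorm]; linarith, ?_⟩
  intro δ hδ
  have hX : (‖ζ‖ - ‖δ‖)^2 ≤ ‖ζ - δ‖^2 := by
    have h1 := abs_norm_sub_norm_le ζ δ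
    calc (‖ζ‖ - ‖δ‖)^2 = |‖ζ‖ - ‖δ‖|^2 := (sq_abs _).symm
      _ ≤ ‖ζ - δ‖^2 := by
        apply pow_le_pow_left₀ (abs_nonneg _) h1
  have e1 : mcpClosed γ (lam*ω) ‖δ‖ = lam*ω*‖δ‖ - ‖δ‖^2/(2*γ) := by
    rw [mcpClosed, if_pos (show ‖δ‖ ≤ γ*(lam*ω) by linarith)]
  have e2 : mcpClosed γ (lam*ω) ‖δstar‖ = lam*ω*(c*‖ζ‖) - (c*‖ζ‖)^2/(2*γ) := by
    rw [mcpClosed, hnorm, if_pos (show c*‖ζ‖ ≤ γ*(lam*ω) from hsle)]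
  rw [e1, e2, hsub]
  have hmain := key_ineq_aux ‖ζ‖ ‖δ‖ (c * ‖ζ‖) (lam*ω) ϑ γ hγ hd.le hds
  have h5 : ϑ/2*(‖ζ‖-‖δ‖)^2 ≤ ϑ/2*‖ζ - δ‖^2 :=
    mul_le_mul_of_nonneg_left hX (by positivity)
  have h6 : ϑ/2*(‖ζ‖ - c*‖ζ‖)^2 = ϑ/2*(‖ζ‖ - c*‖ζ‖)^2 := rfl
  linarith [hmain, h5]
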